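/- Each of the grid hypergraphs H_m from the Baranyai construction is an edge-minimal 2-hypertree: it is chain-connected, contains no semicycle and no chain of length ≥ 3, and deleting any edge {v_{ij}, v_{r s_1}, …, v_{r s_{k−1}}} leaves each pair (v_{ij}, v_{r s_h}) chain-disconnected. -/

import Mathlib

set_option linter.unusedVariables false
set_option linter.unusedSectionVars false
set_option maxHeartbeats 1600000

variable {V : Type*} [DecidableEq V]

/-- The list of consecutive `k`-windows (as finsets) of a vertex sequence. -/
def windows (k : ℕ) (w : List V) : List (Finset V) :=
  (List.range (w.length + 1 - k)).map fun i => ((w.drop i).take k).toFinset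

/-- `w` is the vertex sequence of a chain: `v₁ ≠ v_l`, each window is a `k`-set,
and the `l - k + 1` window edges are pairwise distinct. -/
def IsChainSeq (k : ℕ) (w : List V) : Prop :=
  k ≤ w.length ∧ w.head? ≠ w.getLast? ∧
  (∀ e ∈ windows k w, e.card = k) ∧ (windows k w).Nodup

/-- `w` is the vertex sequence of a semicycle: `v₁ = v_l`, each window is a `k`-set,
and the `l - k + 1` window edges are pairwise distinct. -/
def IsSemicycleSeq (k : ℕ) (w : List V) : Prop :=
  k ≤ w.length ∧ w.head? = w.getLast? ∧
  (∀ e ∈ windows k w, e.card = k) ∧ (windows k w).Nodup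

/-- A hypergraph with edge set `E` contains no semicycle as a subhypergraph. -/
def SemicycleFree (k : ℕ) (E : Finset (Finset V)) : Prop :=
  ¬ ∃ w : List V, IsSemicycleSeq k w ∧ ∀ e ∈ windows k w, e ∈ E

/-- Every two distinct vertices of `S` lie in a common chain subhypergraph of `E`. -/
def ChainConnOn (k : ℕ) (S : Finset V) (E : Finset (Finset V)) : Prop :=
  ∀ u ∈ S, ∀ v ∈ S, u ≠ v →
    ∃ w : List V, IsChainSeq k w ∧ (∀ e ∈ windows k w, e ∈ E) ∧ u ∈ w ∧ v ∈ w

/-- Chain-connectedness on the whole (finite) vertex type. -/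
def ChainConn [Fintype V] (k : ℕ) (E : Finset (Finset V)) : Prop :=
  ChainConnOn k Finset.univ E

/-- A `k`-uniform hypertree: chain-connected and semicycle-free. -/
def IsHypertree [Fintype V] (k : ℕ) (E : Finset (Finset V)) : Prop :=
  (∀ e ∈ E, e.card = k) ∧ ChainConn k E ∧ SemicycleFree k E

/-- Every chain subhypergraph of `E` has length (number of edges) at most `l`. -/
def ChainsLenLE (k l : ℕ) (E : Finset (Finset V)) : Prop :=
  ∀ w : List V, IsChainSeq k w → (∀ e ∈ windows k w, e ∈ E) →
    w.length + 1 - k ≤ l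

/-- An `l`-hypertree: a hypertree all of whose chains have length at most `l`. -/
def IsLHypertree [Fintype V] (k l : ℕ) (E : Finset (Finset V)) : Prop :=
  IsHypertree k E ∧ ChainsLenLE k l E

/-- Edge-minimal: deleting any edge destroys chain-connectedness. -/
def EdgeMinimal [Fintype V] (k : ℕ) (E : Finset (Finset V)) : Prop :=
  ∀ e ∈ E, ¬ ChainConn k (E.erase e)

/-- Edge-maximal: adding any new `k`-set as an edge creates a semicycle. -/
def EdgeMaximal [Fintype V] (k : ℕ) (E : Finset (Finset V)) : Prop :=
  ∀ s : Finset V, s.card = k → s ∉ E → ¬ SemicycleFree k (insert s E)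

/-- `S` is a (tight) star subhypergraph of `E`: a nonempty set of edges of `E`
all containing a common `(k-1)`-set kernel. -/
def IsStarSub (k : ℕ) (E S : Finset (Finset V)) : Prop :=
  S ⊆ E ∧ S.Nonempty ∧ ∃ K : Finset V, K.card = k - 1 ∧ ∀ e ∈ S, K ⊆ e

/-- `S` is a maximal star subhypergraph of `E`. -/
def IsMaxStar (k : ℕ) (E S : Finset (Finset V)) : Prop :=
  IsStarSub k E S ∧ ∀ T, IsStarSub k E T → S ⊆ T → S = T

/-! ### Auxiliary lemmas about windows -/

lemma windows_mem_iff {k : ℕ} {w : List V} {e : Finset V} :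
    e ∈ windows k w ↔ ∃ i, i + k ≤ w.length ∧ e = ((w.drop i).take k).toFinset := by
  simp only [windows, List.mem_map, List.mem_range]
  constructor
  · rintro ⟨i, hi, rfl⟩; exact ⟨i, by omega, rfl⟩
  · rintro ⟨i, hi, rfl⟩; exact ⟨i, by omega, rfl⟩

lemma window_mem (k : ℕ) (w : List V) (i : ℕ) (h : i + k ≤ w.length) :
    ((w.drop i).take k).toFinset ∈ windows k w := windows_mem_iff.2 ⟨i, h, rfl⟩

lemma window_length {k i : ℕ} {w : List V} (h : i + k ≤ w.length) :
    ((w.drop i).take k).length = k := by simp; omega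

lemma window_cons {k i : ℕ} {w : List V} (h : i + k ≤ w.length) (hk : 1 ≤ k) :
    (w.drop i).take k = w[i]'(by omega) :: ((w.drop (i+1)).take (k-1)) := by
  have hi : i < w.length := by omega
  obtain ⟨k', rfl⟩ : ∃ k', k = k' + 1 := ⟨k - 1, by omega⟩
  rw [List.drop_eq_getElem_cons hi, List.take_succ_cons]
  norm_num

lemma window_snoc {k i : ℕ} {w : List V} (h : i + k ≤ w.length) (hk : 1 ≤ k) :
    (w.drop i).take k = ((w.drop i).take (k-1)) ++ [w[i + (k-1)]'(by omega)] := by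
  obtain ⟨k', rfl⟩ : ∃ k', k = k' + 1 := ⟨k - 1, by omega⟩
  have h2 : k' < (w.drop i).length := by simp; omega
  rw [← List.take_concat_get' _ _ h2]
  simp

lemma nodup_of_card_toFinset {L : List V} (h : L.toFinset.card = L.length) : L.Nodup := by
  have := Multiset.toFinset_card_eq_card_iff_nodup (m := (L : Multiset V))
  simp only [Multiset.coe_card, Multiset.coe_nodup] at this
  exact this.1 h

lemma nodup_head?_ne_getLast? {L : List V} (h : L.Nodup) (h2 : 2 ≤ L.length) :
    L.head? ≠ L.getLast? := by
  have h0 : 0 < L.length := by omega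
  rw [List.head?_eq_getElem?, List.getLast?_eq_getElem?, List.getElem?_eq_getElem h0,
    List.getElem?_eq_getElem (by omega)]
  intro hEq
  have := h.getElem_inj_iff.mp (Option.some_injective _ hEq)
  omega

lemma head_eq_last {w : List V} (h0 : 0 < w.length) (hh : w.head? = w.getLast?) :
    w[0]'h0 = w[w.length - 1]'(by omega) := by
  rw [List.head?_eq_getElem?, List.getLast?_eq_getElem?, List.getElem?_eq_getElem h0,
    List.getElem?_eq_getElem (by omega)] at hh
  exact Option.some_injective _ hh

lemma windows_nodup_ne {k : ℕ} {w : List V} (h : (windows k w).Nodup) {i i' : ℕ}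
    (hi : i + k ≤ w.length) (hi' : i' + k ≤ w.length) (hne : i ≠ i') :
    ((w.drop i).take k).toFinset ≠ ((w.drop i').take k).toFinset := by
  intro hEq
  exact hne (List.inj_on_of_nodup_map h (List.mem_range.2 (by omega))
    (List.mem_range.2 (by omega)) hEq)

lemma mem_take_or_drop {k : ℕ} {w : List V} {p : V} (hk : 1 ≤ k) (hp : p ∈ w) :
    p ∈ w.take k ∨ p ∈ w.drop 1 := by
  obtain ⟨idx, hidx, rfl⟩ := List.getElem_of_mem hp
  by_cases hc : idx < k
  · left
    have : (w.take k)[idx]'(by simp; omega) = w[idx] := List.getElem_take ..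
    exact this ▸ List.getElem_mem _
  · right
    have : (w.drop 1)[idx - 1]'(by simp; omega) = w[idx] := by
      rw [List.getElem_drop]; congr 1; omega
    exact this ▸ List.getElem_mem _

lemma windows_single {k : ℕ} {w : List V} (h : w.length = k) :
    windows k w = [w.toFinset] := by
  rw [windows, show w.length + 1 - k = 1 by omega,
    show List.range 1 = [0] from rfl]
  simp [List.take_of_length_le (le_of_eq h)]

lemma windows_pair {k : ℕ} {w : List V} (hk : 1 ≤ k) (h : w.length = k + 1) :
    windows k w = [(w.take k).toFinset, (w.drop 1).toFinset] := by
  rw [windows, show w.length + 1 - k = 2 by omega,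
    show List.range 2 = [0, 1] from rfl]
  simp only [List.map_cons, List.map_nil, List.drop_zero]
  rw [List.take_of_length_le (by simp; omega : (w.drop 1).length ≤ k)]

lemma window_pair_eq {k : ℕ} {w : List V} (hk : 1 ≤ k) (hlen : w.length = k + 1)
    (hhl : w[0]'(by omega) = w[k]'(by omega)) :
    ((w.drop 0).take k).toFinset = ((w.drop 1).take k).toFinset := by
  have h1 : 0 + k ≤ w.length := by omega
  have h2 : 1 + k ≤ w.length := by omega
  have e0 : (w.drop 0).take k = w[0]'(by omega) :: ((w.drop 1).take (k-1)) :=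
    window_cons h1 hk
  have e1 : (w.drop 1).take k = ((w.drop 1).take (k-1)) ++ [w[k]'(by omega)] := by
    have hgc : w[1 + (k-1)]'(by omega) = w[k]'(by omega) := by congr 1; omega
    have := window_snoc h2 hk
    rw [hgc] at this
    exact this
  rw [e0, e1]
  simp only [List.toFinset_cons, List.toFinset_append, List.toFinset_cons, List.toFinset_nil,
    LawfulSingleton.insert_empty_eq]
  rw [hhl, Finset.insert_eq, Finset.union_comm]

/-! ### Structure of membership in the edge images -/

lemma mem_img_iff {m l r : ℕ} (hr : r < l + 1) (s : Finset (Fin m)) (x : Fin (l+1) × Fin m) :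
    x ∈ s.image (fun z => ((⟨r, hr⟩ : Fin (l+1)), z)) ↔ x.1 = ⟨r, hr⟩ ∧ x.2 ∈ s := by
  obtain ⟨a, b⟩ := x
  simp only [Finset.mem_image, Prod.mk.injEq]
  constructor
  · rintro ⟨z, hz, h1, h2⟩; exact ⟨h1.symm, h2 ▸ hz⟩
  · rintro ⟨h1, h2⟩; exact ⟨b, h2, h1.symm, rfl⟩

lemma img_inj {m l r : ℕ} (hr : r < l + 1) :
    Function.Injective (fun z : Fin m => ((⟨r, hr⟩ : Fin (l+1)), z)) := by
  intro a b h; simpa using h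

/-- the Baranyai grid hypergraph is an edge-minimal 2-hypertree,
and deleting any edge disconnects each of its cross-row pairs. -/
theorem stmt15 (k m l : ℕ) (hk : 3 ≤ k) (hm : (k - 1) ∣ m)
    (hl : l = (m - 1).choose (k - 2))
    (B : ℕ → Finset (Finset (Fin m)))
    (hBu : ∀ i < l, ∀ s ∈ B i, s.card = k - 1)
    (hBpart : ∀ i < l, ∀ x : Fin m, ∃! s, s ∈ B i ∧ x ∈ s)
    (hBdisj : ∀ i < l, ∀ j < l, i ≠ j → Disjoint (B i) (B j))
    (hBcover : ∀ s : Finset (Fin m), s.card = k - 1 → ∃ i < l, s ∈ B i)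
    (E : Finset (Finset (Fin (l + 1) × Fin m)))
    (hE : ∀ e, e ∈ E ↔ ∃ i r : ℕ, ∃ j : Fin m, ∃ s ∈ B i,
      ∃ (hi : i < l) (hr : r < l + 1), i < r ∧
        e = insert (⟨i, Nat.lt_succ_of_lt hi⟩, j) (s.image fun x => (⟨r, hr⟩, x))) :
    IsLHypertree k 2 E ∧ EdgeMinimal k E ∧
    (∀ e ∈ E, ∀ p ∈ e, ∀ q ∈ e, p.1 ≠ q.1 →
      ¬ ∃ w : List (Fin (l + 1) × Fin m), IsChainSeq k w ∧
        (∀ f ∈ windows k w, f ∈ E.erase e) ∧ p ∈ w ∧ q ∈ w) := by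
  have hmemE : ∀ {e}, e ∈ E → ∃ (i r : ℕ) (hi : i < l) (hr : r < l + 1) (hir : i < r)
      (j : Fin m) (s : Finset (Fin m)), s ∈ B i ∧
      e = insert (⟨i, Nat.lt_succ_of_lt hi⟩, j) (s.image fun x => (⟨r, hr⟩, x)) := by
    intro e he
    rw [hE] at he
    obtain ⟨i, r, j, s, hs, hi, hr, hir, rfl⟩ := he
    exact ⟨i, r, hi, hr, hir, j, s, hs, rfl⟩
  have hEmem : ∀ (i r : ℕ) (hi : i < l) (hr : r < l+1) (_ : i < r) (j : Fin m)
      (s : Finset (Fin m)) (_ : s ∈ B i),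
      insert ((⟨i, Nat.lt_succ_of_lt hi⟩ : Fin (l+1)), j)
        (s.image fun x => ((⟨r, hr⟩ : Fin (l+1)), x)) ∈ E := by
    intro i r hi hr hir j s hs
    exact (hE _).2 ⟨i, r, j, s, hs, hi, hr, hir, rfl⟩
  have hcardE : ∀ e ∈ E, e.card = k := by
    intro e he
    obtain ⟨i, r, hi, hr, hir, j, s, hs, rfl⟩ := hmemE he
    rw [Finset.card_insert_of_notMem, Finset.card_image_of_injective _ (img_inj hr),
      hBu i hi s hs]
    · omega
    · rw [mem_img_iff]
      rintro ⟨h1, -⟩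
      exact absurd (Fin.mk.injEq .. ▸ h1) (by omega)
  -- structure of two distinct edges sharing ≥ k-1 vertices
  have hstruct : ∀ e f, e ∈ E → f ∈ E → e ≠ f → (k - 1 : ℕ) ≤ (e ∩ f).card →
      ∃ (i r : ℕ) (hi : i < l) (hr : r < l + 1) (hir : i < r) (s : Finset (Fin m))
        (j j' : Fin m), s ∈ B i ∧ j ≠ j' ∧
        e = insert (⟨i, Nat.lt_succ_of_lt hi⟩, j) (s.image fun x => (⟨r, hr⟩, x)) ∧
        f = insert (⟨i, Nat.lt_succ_of_lt hi⟩, j') (s.image fun x => (⟨r, hr⟩, x)) := by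
    intro e f he hf hef hcard
    obtain ⟨i₁, r₁, hi₁, hr₁, hir₁, j₁, s₁, hs₁, rfl⟩ := hmemE he
    obtain ⟨i₂, r₂, hi₂, hr₂, hir₂, j₂, s₂, hs₂, rfl⟩ := hmemE hf
    set a₁ : Fin (l+1) × Fin m := (⟨i₁, Nat.lt_succ_of_lt hi₁⟩, j₁) with ha₁
    set a₂ : Fin (l+1) × Fin m := (⟨i₂, Nat.lt_succ_of_lt hi₂⟩, j₂) with ha₂
    set D₁ := s₁.image (fun x => ((⟨r₁, hr₁⟩ : Fin (l+1)), x)) with hD₁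
    set D₂ := s₂.image (fun x => ((⟨r₂, hr₂⟩ : Fin (l+1)), x)) with hD₂
    have hknum : 2 ≤ k - 1 := by omega
    have hnsub : ¬ (insert a₁ D₁ ∩ insert a₂ D₂ ⊆ {a₁}) := by
      intro h
      have := Finset.card_le_card h
      simp only [Finset.card_singleton] at this
      omega
    obtain ⟨x, hx, hxa⟩ := Finset.not_subset.1 hnsub
    rw [Finset.mem_singleton] at hxa
    have hx1 : x ∈ insert a₁ D₁ := (Finset.mem_inter.1 hx).1
    have hx2 : x ∈ insert a₂ D₂ := (Finset.mem_inter.1 hx).2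
    have hxD₁ : x ∈ D₁ := (Finset.mem_insert.1 hx1).resolve_left hxa
    have hx1f : x.1 = ⟨r₁, hr₁⟩ := ((mem_img_iff hr₁ s₁ x).1 hxD₁).1
    have hx1s : x.2 ∈ s₁ := ((mem_img_iff hr₁ s₁ x).1 hxD₁).2
    rcases Finset.mem_insert.1 hx2 with hxA | hxD₂
    · -- x is the apex of f : i₂ = r₁, contradiction via small intersection
      exfalso
      have hi₂r₁ : i₂ = r₁ := by
        rw [hxA] at hx1f
        exact congrArg Fin.val (show (⟨i₂, Nat.lt_succ_of_lt hi₂⟩ : Fin (l+1)) = ⟨r₁, hr₁⟩ from hx1f)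
      have hsub : insert a₁ D₁ ∩ insert a₂ D₂ ⊆ {a₂} := by
        intro y hy
        have hy1 := (Finset.mem_inter.1 hy).1
        have hy2 := (Finset.mem_inter.1 hy).2
        rcases Finset.mem_insert.1 hy1 with h1 | h1
        · -- y = a₁, row i₁ < r₁ = i₂ < r₂ : cannot be in f
          exfalso
          rcases Finset.mem_insert.1 hy2 with h2 | h2
          · rw [h1] at h2
            have := congrArg (fun z => z.1.1) h2
            simp [ha₁, ha₂] at this
            omega
          · rw [h1] at h2
            have := ((mem_img_iff hr₂ s₂ a₁).1 h2).1
            have := congrArg Fin.val this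
            simp [ha₁] at this
            omega
        · -- y ∈ D₁ : row r₁
          rcases Finset.mem_insert.1 hy2 with h2 | h2
          · simpa using h2
          · exfalso
            have hyr₁ := ((mem_img_iff hr₁ s₁ y).1 h1).1
            have hyr₂ := ((mem_img_iff hr₂ s₂ y).1 h2).1
            rw [hyr₁] at hyr₂
            have := congrArg Fin.val hyr₂
            simp at this
            omega
      have := Finset.card_le_card hsub
      simp only [Finset.card_singleton] at this
      omega
    · -- x ∈ D₂ : r₁ = r₂
      have hx2f : x.1 = ⟨r₂, hr₂⟩ := ((mem_img_iff hr₂ s₂ x).1 hxD₂).1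
      have hx2s : x.2 ∈ s₂ := ((mem_img_iff hr₂ s₂ x).1 hxD₂).2
      have hrr : r₁ = r₂ := by
        rw [hx1f] at hx2f
        exact congrArg Fin.val hx2f
      subst hrr
      by_cases hii : i₁ = i₂
      · subst hii
        obtain ⟨s₀, hs₀, huni⟩ := hBpart i₁ hi₁ x.2
        have hs12 : s₁ = s₂ := by
          rw [huni s₁ ⟨hs₁, hx1s⟩, huni s₂ ⟨hs₂, hx2s⟩]
        subst hs12
        have hjj : j₁ ≠ j₂ := by
          intro h; exact hef (by rw [ha₁, ha₂, h])
        exact ⟨i₁, r₁, hi₁, hr₁, hir₁, s₁, j₁, j₂, hs₁, hjj, rfl, rfl⟩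
      · exfalso
        -- the intersection is contained in the image of s₁ ∩ s₂
        have hsub : insert a₁ D₁ ∩ insert a₂ D₂ ⊆
            (s₁ ∩ s₂).image (fun z => ((⟨r₁, hr₁⟩ : Fin (l+1)), z)) := by
          intro y hy
          have hy1 := (Finset.mem_inter.1 hy).1
          have hy2 := (Finset.mem_inter.1 hy).2
          have hyD₁ : y ∈ D₁ := by
            rcases Finset.mem_insert.1 hy1 with h1 | h1
            · exfalso
              rcases Finset.mem_insert.1 hy2 with h2 | h2
              · rw [h1] at h2
                have := congrArg (fun z => z.1.1) h2
                simp [ha₁, ha₂] at this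
                omega
              · rw [h1] at h2
                have := congrArg Fin.val ((mem_img_iff hr₂ s₂ a₁).1 h2).1
                simp [ha₁] at this
                omega
            · exact h1
          have hyD₂ : y ∈ D₂ := by
            rcases Finset.mem_insert.1 hy2 with h2 | h2
            · exfalso
              rw [h2] at hyD₁
              have := congrArg Fin.val ((mem_img_iff hr₁ s₁ a₂).1 hyD₁).1
              simp [ha₂] at this
              omega
            · exact h2
          rw [mem_img_iff]
          exact ⟨((mem_img_iff hr₁ s₁ y).1 hyD₁).1, Finset.mem_inter.2
            ⟨((mem_img_iff hr₁ s₁ y).1 hyD₁).2, ((mem_img_iff hr₂ s₂ y).1 hyD₂).2⟩⟩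
        have hcard2 : k - 1 ≤ (s₁ ∩ s₂).card := by
          have h1 := Finset.card_le_card hsub
          rw [Finset.card_image_of_injective _ (img_inj hr₁)] at h1
          omega
        have hs1eq : s₁ ∩ s₂ = s₁ := Finset.eq_of_subset_of_card_le
          Finset.inter_subset_left (by rw [hBu i₁ hi₁ s₁ hs₁]; exact hcard2)
        have hs2eq : s₁ ∩ s₂ = s₂ := Finset.eq_of_subset_of_card_le
          Finset.inter_subset_right (by rw [hBu i₂ hi₂ s₂ hs₂]; exact hcard2)
        have : s₁ = s₂ := hs1eq ▸ hs2eq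
        have hbot : s₁ ∈ (⊥ : Finset (Finset (Fin m))) :=
          (hBdisj i₁ hi₁ i₂ hi₂ hii).le_bot (Finset.mem_inter.2 ⟨hs₁, this ▸ hs₂⟩)
        simpa using hbot
  have huniq : ∀ (p q : Fin (l+1) × Fin m) e f, e ∈ E → f ∈ E → p ∈ e → q ∈ e →
      p ∈ f → q ∈ f → p.1 ≠ q.1 → e = f := by
    intro p q e f he hf hpe hqe hpf hqf hpq
    obtain ⟨i₁, r₁, hi₁, hr₁, hir₁, j₁, s₁, hs₁, rfl⟩ := hmemE he
    obtain ⟨i₂, r₂, hi₂, hr₂, hir₂, j₂, s₂, hs₂, rfl⟩ := hmemE hf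
    set a₁ : Fin (l+1) × Fin m := (⟨i₁, Nat.lt_succ_of_lt hi₁⟩, j₁) with ha₁
    set a₂ : Fin (l+1) × Fin m := (⟨i₂, Nat.lt_succ_of_lt hi₂⟩, j₂) with ha₂
    set D₁ := s₁.image (fun x => ((⟨r₁, hr₁⟩ : Fin (l+1)), x)) with hD₁
    set D₂ := s₂.image (fun x => ((⟨r₂, hr₂⟩ : Fin (l+1)), x)) with hD₂
    have core : ∀ u v : Fin (l+1) × Fin m, u = a₁ → v ∈ D₁ →
        u ∈ insert a₂ D₂ → v ∈ insert a₂ D₂ → insert a₁ D₁ = insert a₂ D₂ := by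
      intro u v hu hv hu2 hv2
      have hvr₁ : v.1 = ⟨r₁, hr₁⟩ := ((mem_img_iff hr₁ s₁ v).1 hv).1
      have hvs₁ : v.2 ∈ s₁ := ((mem_img_iff hr₁ s₁ v).1 hv).2
      rcases Finset.mem_insert.1 hv2 with hv3 | hv3
      · -- v = a₂ : i₂ = r₁
        exfalso
        have hi₂r₁ : i₂ = r₁ := by
          rw [hv3] at hvr₁
          exact congrArg Fin.val
            (show (⟨i₂, Nat.lt_succ_of_lt hi₂⟩ : Fin (l+1)) = ⟨r₁, hr₁⟩ from hvr₁)
        rcases Finset.mem_insert.1 hu2 with hu3 | hu3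
        · -- u = a₁ = a₂ : i₁ = i₂ = r₁ contradiction
          rw [hu] at hu3
          have := congrArg (fun z => z.1.1) hu3
          simp [ha₁, ha₂] at this
          omega
        · -- a₁ ∈ D₂ : i₁ = r₂ > r₁ > i₁ contradiction
          rw [hu] at hu3
          have := congrArg Fin.val ((mem_img_iff hr₂ s₂ a₁).1 hu3).1
          simp [ha₁] at this
          omega
      · -- v ∈ D₂ : r₁ = r₂
        have hvr₂ := ((mem_img_iff hr₂ s₂ v).1 hv3).1
        have hvs₂ : v.2 ∈ s₂ := ((mem_img_iff hr₂ s₂ v).1 hv3).2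
        have hrr : r₁ = r₂ := by
          rw [hvr₁] at hvr₂
          exact congrArg Fin.val hvr₂
        subst hrr
        rcases Finset.mem_insert.1 hu2 with hu3 | hu3
        · -- u = a₁ = a₂ : good case
          rw [hu] at hu3
          have hii : i₁ = i₂ := congrArg (fun z => z.1.1) hu3
          have hjj : j₁ = j₂ := congrArg Prod.snd hu3
          subst hii; subst hjj
          obtain ⟨s₀, hs₀, huni⟩ := hBpart i₁ hi₁ v.2
          have : s₁ = s₂ := by rw [huni s₁ ⟨hs₁, hvs₁⟩, huni s₂ ⟨hs₂, hvs₂⟩]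
          subst this
          rfl
        · -- a₁ ∈ D₂ : i₁ = r₁ contradiction
          exfalso
          rw [hu] at hu3
          have := congrArg Fin.val ((mem_img_iff hr₂ s₂ a₁).1 hu3).1
          simp [ha₁] at this
          omega
    rcases Finset.mem_insert.1 hpe with hp1 | hp1 <;>
      rcases Finset.mem_insert.1 hqe with hq1 | hq1
    · exact absurd (congrArg Prod.fst (hp1.trans hq1.symm)) hpq
    · exact core p q hp1 hq1 hpf hqf
    · exact core q p hq1 hp1 hqf hpf
    · exfalso
      have h1 := ((mem_img_iff hr₁ s₁ p).1 hp1).1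
      have h2 := ((mem_img_iff hr₁ s₁ q).1 hq1).1
      exact hpq (h1.trans h2.symm)
  have hadj : ∀ (w : List (Fin (l+1) × Fin m)) (i : ℕ) (hlen : i + k + 1 ≤ w.length)
      (hcards : ∀ e ∈ windows k w, e.card = k) (hnd : (windows k w).Nodup)
      (hmemsE : ∀ e ∈ windows k w, e ∈ E),
      ∃ (i0 r : ℕ) (hi0 : i0 < l) (hr : r < l + 1) (hir : i0 < r) (s : Finset (Fin m))
        (j j' : Fin m), s ∈ B i0 ∧ j ≠ j' ∧
        ((w.drop i).take k).toFinset =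
          insert (⟨i0, Nat.lt_succ_of_lt hi0⟩, j) (s.image fun x => (⟨r, hr⟩, x)) ∧
        ((w.drop (i+1)).take k).toFinset =
          insert (⟨i0, Nat.lt_succ_of_lt hi0⟩, j') (s.image fun x => (⟨r, hr⟩, x)) ∧
        w[i]'(by omega) = (⟨i0, Nat.lt_succ_of_lt hi0⟩, j) ∧
        w[i+k]'(by omega) = (⟨i0, Nat.lt_succ_of_lt hi0⟩, j') ∧
        ((w.drop (i+1)).take (k-1)).toFinset = s.image fun x => (⟨r, hr⟩, x) := by
    intro w i hlen hcards hnd hmemsE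
    have hk1 : 1 ≤ k := by omega
    have h1 : i + k ≤ w.length := by omega
    have h2 : (i+1) + k ≤ w.length := by omega
    have hiw : i < w.length := by omega
    have hikw : i + k < w.length := by omega
    set M := (w.drop (i+1)).take (k-1) with hM
    have e0 : (w.drop i).take k = w[i]'hiw :: M := window_cons h1 hk1
    have e1 : (w.drop (i+1)).take k = M ++ [w[i+k]'hikw] := by
      have hgc : w[i + 1 + (k-1)]'(by omega) = w[i+k]'hikw := by congr 1; omega
      have := window_snoc h2 hk1
      rw [hgc] at this
      exact this
    have hmem0 := window_mem k w i h1
    have hmem1 := window_mem k w (i+1) h2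
    have hc0 : ((w.drop i).take k).toFinset.card = k := hcards _ hmem0
    have hc1 : ((w.drop (i+1)).take k).toFinset.card = k := hcards _ hmem1
    have hnd0 : ((w.drop i).take k).Nodup :=
      nodup_of_card_toFinset (by rw [hc0, window_length h1])
    have hnd1 : ((w.drop (i+1)).take k).Nodup :=
      nodup_of_card_toFinset (by rw [hc1, window_length h2])
    rw [e0] at hnd0
    rw [e1] at hnd1
    have hwiM : w[i]'hiw ∉ M := (List.nodup_cons.1 hnd0).1
    have hMnd : M.Nodup := (List.nodup_cons.1 hnd0).2
    have hwkM : w[i+k]'hikw ∉ M := by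
      rw [List.nodup_append] at hnd1
      intro hmm
      exact hnd1.2.2 _ hmm _ (List.mem_singleton_self _) rfl
    have hMcard : M.toFinset.card = k - 1 := by
      rw [List.toFinset_card_of_nodup hMnd, hM]
      simp
      omega
    have hF0 : ((w.drop i).take k).toFinset = insert (w[i]'hiw) M.toFinset := by
      rw [e0]; simp
    have hF1 : ((w.drop (i+1)).take k).toFinset = insert (w[i+k]'hikw) M.toFinset := by
      rw [e1]
      simp only [List.toFinset_append, List.toFinset_cons, List.toFinset_nil, LawfulSingleton.insert_empty_eq]
      rw [Finset.insert_eq, Finset.union_comm]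
    have hne : ((w.drop i).take k).toFinset ≠ ((w.drop (i+1)).take k).toFinset :=
      windows_nodup_ne hnd h1 h2 (by omega)
    have hsubM : M.toFinset ⊆ ((w.drop i).take k).toFinset ∩ ((w.drop (i+1)).take k).toFinset := by
      intro x hx
      rw [Finset.mem_inter, hF0, hF1]
      exact ⟨Finset.mem_insert_of_mem hx, Finset.mem_insert_of_mem hx⟩
    have hcard_inter : k - 1 ≤ (((w.drop i).take k).toFinset ∩ ((w.drop (i+1)).take k).toFinset).card := by
      have := Finset.card_le_card hsubM
      omega
    obtain ⟨i0, r, hi0, hr, hir, s, j, j', hsB, hjj, hE0, hE1⟩ :=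
      hstruct _ _ (hmemsE _ hmem0) (hmemsE _ hmem1) hne hcard_inter
    set a : Fin (l+1) × Fin m := (⟨i0, Nat.lt_succ_of_lt hi0⟩, j) with ha
    set a' : Fin (l+1) × Fin m := (⟨i0, Nat.lt_succ_of_lt hi0⟩, j') with ha'
    set D := s.image (fun x => ((⟨r, hr⟩ : Fin (l+1)), x)) with hD
    have haa : a ≠ a' := fun h => hjj (congrArg Prod.snd h)
    have hwne : w[i]'hiw ≠ w[i+k]'hikw := by
      intro h
      apply hne
      rw [hF0, hF1, h]
    have hinter1 : ((w.drop i).take k).toFinset ∩ ((w.drop (i+1)).take k).toFinset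
        = M.toFinset := by
      apply Finset.Subset.antisymm _ hsubM
      intro x hx
      rw [Finset.mem_inter, hF0, hF1] at hx
      obtain ⟨hx0, hx1⟩ := hx
      rcases Finset.mem_insert.1 hx0 with h0 | h0
      · rcases Finset.mem_insert.1 hx1 with h1 | h1
        · exact absurd (h0 ▸ h1 ▸ rfl) hwne
        · exact h1
      · exact h0
    have hinter2 : ((w.drop i).take k).toFinset ∩ ((w.drop (i+1)).take k).toFinset = D := by
      rw [hE0, hE1]
      apply Finset.Subset.antisymm
      · intro x hx
        rw [Finset.mem_inter] at hx
        rcases Finset.mem_insert.1 hx.1 with h0 | h0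
        · rcases Finset.mem_insert.1 hx.2 with h1 | h1
          · exact absurd (h0.symm.trans h1) haa
          · exact h1
        · exact h0
      · intro x hx
        exact Finset.mem_inter.2 ⟨Finset.mem_insert_of_mem hx, Finset.mem_insert_of_mem hx⟩
    have hMD : M.toFinset = D := by rw [← hinter1, hinter2]
    have hwia : w[i]'hiw = a := by
      have hmemF0 : w[i]'hiw ∈ ((w.drop i).take k).toFinset := by
        rw [hF0]; exact Finset.mem_insert_self _ _
      rw [hE0] at hmemF0
      rcases Finset.mem_insert.1 hmemF0 with h0 | h0
      · exact h0
      · rw [← hMD] at h0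
        exact absurd (List.mem_toFinset.1 h0) hwiM
    have hwka : w[i+k]'hikw = a' := by
      have hmemF1 : w[i+k]'hikw ∈ ((w.drop (i+1)).take k).toFinset := by
        rw [hF1]; exact Finset.mem_insert_self _ _
      rw [hE1] at hmemF1
      rcases Finset.mem_insert.1 hmemF1 with h0 | h0
      · exact h0
      · rw [← hMD] at h0
        exact absurd (List.mem_toFinset.1 h0) hwkM
    exact ⟨i0, r, hi0, hr, hir, s, j, j', hsB, hjj, hE0, hE1, hwia, hwka, hMD⟩
  -- no chain/semicycle has three windows
  have h3 : ∀ (w : List (Fin (l+1) × Fin m)) (hlen : k + 2 ≤ w.length)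
      (hcards : ∀ e ∈ windows k w, e.card = k) (hnd : (windows k w).Nodup)
      (hmemsE : ∀ e ∈ windows k w, e ∈ E), False := by
    intro w hlen hcards hnd hmemsE
    obtain ⟨i0, r, hi0, hr, hir, s, j, j', hsB, hjj, hA0, hA1, hw0, hwk, hMD0⟩ :=
      hadj w 0 (by omega) hcards hnd hmemsE
    obtain ⟨i0', r', hi0', hr', hir', s', jb, jb', hsB', hjj', hB0, hB1, hw1, hwk1, hMD1⟩ :=
      hadj w 1 (by omega) hcards hnd hmemsE
    -- w[1] lies in the common body of windows 0,1 : its row is r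
    have hw1mem : w[1]'(by omega) ∈ (w.drop (0+1)).take (k-1) := by
      have hb : (0:ℕ) < ((w.drop (0+1)).take (k-1)).length := by simp; omega
      have : ((w.drop (0+1)).take (k-1))[0]'hb = w[1]'(by omega) := by
        rw [List.getElem_take, List.getElem_drop]
      exact this ▸ List.getElem_mem _
    have hw1row : (w[1]'(by omega)).1 = (⟨r, hr⟩ : Fin (l+1)) := by
      have := List.mem_toFinset.2 hw1mem
      rw [hMD0] at this
      exact ((mem_img_iff hr s _).1 this).1
    -- w[k] lies in the common body of windows 1,2 : its row is r'
    have hwkmem : w[0+k]'(by omega) ∈ (w.drop (1+1)).take (k-1) := by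
      have hb : k - 2 < ((w.drop (1+1)).take (k-1)).length := by simp; omega
      have : ((w.drop (1+1)).take (k-1))[k-2]'hb = w[0+k]'(by omega) := by
        rw [List.getElem_take, List.getElem_drop]
        congr 1
        omega
      exact this ▸ List.getElem_mem _
    have hwkrow : (w[0+k]'(by omega)).1 = (⟨r', hr'⟩ : Fin (l+1)) := by
      have := List.mem_toFinset.2 hwkmem
      rw [hMD1] at this
      exact ((mem_img_iff hr' s' _).1 this).1
    -- rows : w[1] has row i0' (apex of window1 pair) and row r ; w[k] has row i0 and r'
    have h1 : i0' = r := by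
      have := congrArg Fin.val (hw1 ▸ hw1row : ((⟨i0', Nat.lt_succ_of_lt hi0'⟩ : Fin (l+1)), jb).1 = ⟨r, hr⟩)
      simpa using this
    have h2 : i0 = r' := by
      have := congrArg Fin.val (hwk ▸ hwkrow : ((⟨i0, Nat.lt_succ_of_lt hi0⟩ : Fin (l+1)), j').1 = ⟨r', hr'⟩)
      simpa using this
    omega
  -- single-edge chains
  have hchain1 : ∀ e, e ∈ E → ∀ u v : Fin (l+1) × Fin m, u ∈ e → v ∈ e → u ≠ v →
      ∃ w, IsChainSeq k w ∧ (∀ f ∈ windows k w, f ∈ E) ∧ u ∈ w ∧ v ∈ w := by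
    intro e he u v hu hv huv
    have hlen : e.toList.length = k := by rw [Finset.length_toList, hcardE e he]
    have hw : windows k e.toList = [e] := by
      rw [windows_single hlen, Finset.toList_toFinset]
    refine ⟨e.toList, ⟨by omega, ?_, ?_, ?_⟩, ?_, ?_, ?_⟩
    · exact nodup_head?_ne_getLast? (Finset.nodup_toList e) (by omega)
    · rw [hw]; intro f hf; rw [List.mem_singleton] at hf; subst hf; exact hcardE _ he
    · rw [hw]; exact List.nodup_singleton _
    · rw [hw]; intro f hf; rw [List.mem_singleton] at hf; subst hf; exact he
    · exact Finset.mem_toList.2 hu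
    · exact Finset.mem_toList.2 hv
  -- two-edge chains connecting two vertices in a common row above the last block row
  have hchain2 : ∀ (a : Fin (l+1)) (hal : a.val < l) (b d : Fin m) (hbd : b ≠ d),
      ∃ w, IsChainSeq k w ∧ (∀ f ∈ windows k w, f ∈ E) ∧ (a, b) ∈ w ∧ (a, d) ∈ w := by
    intro a hal b d hbd
    obtain ⟨s₀, ⟨hs₀B, -⟩, -⟩ := hBpart a.val hal b
    set D := s₀.image (fun z => ((⟨l, Nat.lt_succ_self l⟩ : Fin (l+1)), z)) with hDdef
    have hDcard : D.card = k - 1 := by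
      rw [hDdef, Finset.card_image_of_injective _ (img_inj _), hBu _ hal _ hs₀B]
    have hDlen : D.toList.length = k - 1 := by rw [Finset.length_toList, hDcard]
    set w := ((a, b) : Fin (l+1) × Fin m) :: (D.toList ++ [(a, d)]) with hwdef
    have hwlen : w.length = k + 1 := by
      rw [hwdef, List.length_cons, List.length_append, List.length_singleton, hDlen]
      omega
    have htake : w.take k = (a, b) :: D.toList := by
      obtain ⟨k', hk'⟩ : ∃ k', k = k' + 1 := ⟨k - 1, by omega⟩
      rw [hwdef, hk', List.take_succ_cons, List.take_left' (by omega : D.toList.length = k')]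
    have hdrop : w.drop 1 = D.toList ++ [(a, d)] := by rw [hwdef]; rfl
    have hWpair : windows k w = [(w.take k).toFinset, (w.drop 1).toFinset] :=
      windows_pair (by omega) hwlen
    have hF0 : (w.take k).toFinset = insert (a, b) D := by
      rw [htake, List.toFinset_cons, Finset.toList_toFinset]
    have hF1 : (w.drop 1).toFinset = insert (a, d) D := by
      rw [hdrop]
      simp only [List.toFinset_append, List.toFinset_cons, List.toFinset_nil,
        LawfulSingleton.insert_empty_eq, Finset.toList_toFinset]
      rw [Finset.insert_eq, Finset.union_comm]
    have habD : ∀ c : Fin m, ((a, c) : Fin (l+1) × Fin m) ∉ D := by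
      intro c hc
      rw [hDdef] at hc
      have := congrArg Fin.val ((mem_img_iff (Nat.lt_succ_self l) s₀ _).1 hc).1
      simp at this
      omega
    have he1 : insert ((a, b) : Fin (l+1) × Fin m) D ∈ E := by
      have h := hEmem a.val l hal (Nat.lt_succ_self l) hal b s₀ hs₀B
      rwa [Fin.eta] at h
    have he2 : insert ((a, d) : Fin (l+1) × Fin m) D ∈ E := by
      have h := hEmem a.val l hal (Nat.lt_succ_self l) hal d s₀ hs₀B
      rwa [Fin.eta] at h
    have hF01 : (w.take k).toFinset ≠ (w.drop 1).toFinset := by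
      rw [hF0, hF1]
      intro hEq
      have : ((a, b) : Fin (l+1) × Fin m) ∈ insert ((a, d) : Fin (l+1) × Fin m) D := by
        rw [← hEq]; exact Finset.mem_insert_self _ _
      rcases Finset.mem_insert.1 this with h' | h'
      · exact hbd (congrArg Prod.snd h')
      · exact habD b h'
    refine ⟨w, ⟨by omega, ?_, ?_, ?_⟩, ?_, ?_, ?_⟩
    · have hhead : w.head? = some (a, b) := by rw [hwdef]; rfl
      have hlast : w.getLast? = some (a, d) := by
        rw [hwdef, show ((a, b) : Fin (l+1) × Fin m) :: (D.toList ++ [(a, d)]) =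
          (((a, b) : Fin (l+1) × Fin m) :: D.toList) ++ [(a, d)] from rfl,
          List.getLast?_concat]
      rw [hhead, hlast]
      intro hEq
      exact hbd (congrArg Prod.snd (Option.some_injective _ hEq))
    · rw [hWpair]
      intro f hf
      rcases List.mem_pair.1 hf with rfl | rfl
      · rw [hF0]; exact hcardE _ he1
      · rw [hF1]; exact hcardE _ he2
    · rw [hWpair, List.nodup_cons]
      exact ⟨by simpa using hF01, List.nodup_singleton _⟩
    · rw [hWpair]
      intro f hf
      rcases List.mem_pair.1 hf with rfl | rfl
      · rw [hF0]; exact he1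
      · rw [hF1]; exact he2
    · rw [hwdef]; exact List.mem_cons_self
    · rw [hwdef]; simp
  -- chain connectivity
  have hconn : ChainConn k E := by
    intro u hu v hv huv
    obtain ⟨a, b⟩ := u
    obtain ⟨c, d⟩ := v
    rcases lt_trichotomy a.val c.val with hlt | heq | hgt
    · -- a below c
      have hal : a.val < l := by have := c.isLt; omega
      obtain ⟨s, ⟨hsB, hds⟩, -⟩ := hBpart a.val hal d
      have heE := hEmem a.val c.val hal c.isLt hlt b s hsB
      rw [Fin.eta] at heE
      apply hchain1 _ heE
      · exact Finset.mem_insert_self _ _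
      · exact Finset.mem_insert_of_mem (Finset.mem_image.2 ⟨d, hds, rfl⟩)
      · exact huv
    · -- same row
      have hac : a = c := Fin.val_injective heq
      subst hac
      have hbd : b ≠ d := by
        intro h; exact huv (by rw [h])
      rcases Nat.lt_or_ge a.val l with htl | htl
      · obtain ⟨w, h1, h2, h3', h4⟩ := hchain2 a htl b d hbd
        exact ⟨w, h1, h2, h3', h4⟩
      · -- a is the last row
        have hale : a.val = l := by have := a.isLt; omega
        have hm0 : 0 < m := b.pos
        have hmk : k - 1 ≤ m := Nat.le_of_dvd hm0 hm
        have hbd2 : ({b, d} : Finset (Fin m)).card ≤ k - 1 := by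
          refine le_trans (Finset.card_insert_le _ _) ?_
          simp
          omega
        obtain ⟨s, hsub2, -, hscard⟩ := Finset.exists_subsuperset_card_eq
          (Finset.subset_univ ({b, d} : Finset (Fin m))) hbd2
          (by rw [Finset.card_univ, Fintype.card_fin]; exact hmk)
        obtain ⟨i, hi, hsB⟩ := hBcover s hscard
        have hir : i < a.val := by omega
        have heE := hEmem i a.val hi a.isLt hir b s hsB
        rw [Fin.eta] at heE
        apply hchain1 _ heE
        · exact Finset.mem_insert_of_mem (Finset.mem_image.2
            ⟨b, hsub2 (Finset.mem_insert_self _ _), rfl⟩)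
        · exact Finset.mem_insert_of_mem (Finset.mem_image.2
            ⟨d, hsub2 (Finset.mem_insert_of_mem (Finset.mem_singleton_self _)), rfl⟩)
        · exact huv
    · -- c below a : use the symmetric chain
      have hcl : c.val < l := by have := a.isLt; omega
      obtain ⟨s, ⟨hsB, hbs⟩, -⟩ := hBpart c.val hcl b
      have heE := hEmem c.val a.val hcl a.isLt hgt d s hsB
      rw [Fin.eta] at heE
      obtain ⟨w, h1, h2, h3', h4⟩ := hchain1 _ heE (c, d) (a, b)
        (Finset.mem_insert_self _ _)
        (Finset.mem_insert_of_mem (Finset.mem_image.2 ⟨b, hbs, rfl⟩))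
        (fun h => huv h.symm)
      exact ⟨w, h1, h2, h4, h3'⟩
  -- semicycle freeness
  have hsemi : SemicycleFree k E := by
    rintro ⟨w, ⟨hkle, hcyc, hcards, hnd⟩, hws⟩
    rcases Nat.lt_or_ge w.length (k + 2) with hlen | hlen
    · rcases Nat.lt_or_ge w.length (k + 1) with hlen1 | hlen1
      · -- length = k : the whole sequence is one window, nodup, so head ≠ last
        have hlk : w.length = k := by omega
        have hwmem : w.toFinset ∈ windows k w := by
          have := window_mem k w 0 (by omega)
          rwa [List.drop_zero, List.take_of_length_le (le_of_eq hlk)] at this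
        have hwnd : w.Nodup := nodup_of_card_toFinset (by rw [hcards _ hwmem, hlk])
        exact nodup_head?_ne_getLast? hwnd (by omega) hcyc
      · -- length = k + 1 : the two windows coincide
        have hlk : w.length = k + 1 := by omega
        have hhl : w[0]'(by omega) = w[k]'(by omega) := by
          have := head_eq_last (by omega) hcyc
          have hgc : w[w.length - 1]'(by omega) = w[k]'(by omega) := by congr 1; omega
          rw [hgc] at this
          exact this
        exact windows_nodup_ne hnd (by omega : 0 + k ≤ w.length)
          (by omega : 1 + k ≤ w.length) (by omega)
          (window_pair_eq (by omega) hlk hhl)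
    · exact h3 w hlen hcards hnd hws
  -- chains have length at most 2
  have hlenle : ChainsLenLE k 2 E := by
    intro w hcs hws
    by_contra hgt
    exact h3 w (by omega) hcs.2.2.1 hcs.2.2.2 hws
  -- deleting an edge disconnects its cross-row pairs
  have hdisc : ∀ e ∈ E, ∀ p ∈ e, ∀ q ∈ e, p.1 ≠ q.1 →
      ¬ ∃ w : List (Fin (l + 1) × Fin m), IsChainSeq k w ∧
        (∀ f ∈ windows k w, f ∈ E.erase e) ∧ p ∈ w ∧ q ∈ w := by
    rintro e he p hp q hq hpq ⟨w, ⟨hkle, hhl, hcards, hnd⟩, hws, hpw, hqw⟩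
    have hwE : ∀ f ∈ windows k w, f ∈ E := fun f hf => Finset.mem_of_mem_erase (hws f hf)
    have hlen2 : w.length ≤ k + 1 := by
      by_contra hgt
      exact h3 w (by omega) hcards hnd hwE
    have key : ∀ f, f ∈ E.erase e → p ∈ f → q ∈ f → False := by
      intro f hf h1 h2
      exact Finset.ne_of_mem_erase hf
        (huniq p q f e (Finset.mem_of_mem_erase hf) he h1 h2 hp hq hpq)
    rcases Nat.lt_or_ge w.length (k + 1) with hc | hc
    · -- one window
      have hlk : w.length = k := by omega
      have hwin : windows k w = [w.toFinset] := windows_single hlk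
      have hFE : w.toFinset ∈ E.erase e := hws _ (by rw [hwin]; exact List.mem_singleton_self _)
      exact key _ hFE (List.mem_toFinset.2 hpw) (List.mem_toFinset.2 hqw)
    · -- two windows
      have hlk : w.length = k + 1 := by omega
      obtain ⟨i0, r, hi0, hr, hir, s, j, j', hsB, hjj, hE0, hE1, hw0, hwk, hMD⟩ :=
        hadj w 0 (by omega) hcards hnd hwE
      have hW0mem : ((w.drop 0).take k).toFinset ∈ E.erase e :=
        hws _ (window_mem k w 0 (by omega))
      have hW1mem : ((w.drop 1).take k).toFinset ∈ E.erase e := by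
        have := hws _ (window_mem k w 1 (by omega))
        convert this using 3
      have hd1 : (w.drop 1).take k = w.drop 1 :=
        List.take_of_length_le (by simp; omega)
      have hconv : ∀ x : Fin (l+1) × Fin m, x ∈ w →
          x ∈ ((w.drop 0).take k).toFinset ∨ x ∈ ((w.drop 1).take k).toFinset := by
        intro x hx
        rcases mem_take_or_drop (by omega : 1 ≤ k) hx with h' | h'
        · left
          rw [List.mem_toFinset, List.drop_zero]
          exact h'
        · right
          rw [List.mem_toFinset, hd1]
          exact h'
      have hpAB := hconv p hpw
      have hqAB := hconv q hqw
      have hsubD : ∀ x : Fin (l+1) × Fin m,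
          x ∈ s.image (fun z => ((⟨r, hr⟩ : Fin (l+1)), z)) →
          x ∈ ((w.drop 0).take k).toFinset ∧ x ∈ ((w.drop 1).take k).toFinset := by
        intro x hx
        constructor
        · rw [hE0]; exact Finset.mem_insert_of_mem hx
        · rw [hE1]; exact Finset.mem_insert_of_mem hx
      rcases hpAB with hpA | hpB <;> rcases hqAB with hqA | hqB
      · exact key _ hW0mem hpA hqA
      · -- p in window0, q in window1
        have hpA' := hpA
        have hqB' := hqB
        rw [hE0] at hpA
        rw [hE1] at hqB
        rcases Finset.mem_insert.1 hpA with h1 | h1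
        · rcases Finset.mem_insert.1 hqB with h2 | h2
          · exact hpq (by rw [h1, h2])
          · exact key _ hW0mem hpA' (hsubD q h2).1
        · exact key _ hW1mem (hsubD p h1).2 hqB'
      · -- q in window0, p in window1
        have hpB' := hpB
        have hqA' := hqA
        rw [hE1] at hpB
        rw [hE0] at hqA
        rcases Finset.mem_insert.1 hpB with h1 | h1
        · rcases Finset.mem_insert.1 hqA with h2 | h2
          · exact hpq (by rw [h1, h2])
          · exact key _ hW1mem hpB' (hsubD q h2).2
        · exact key _ hW0mem (hsubD p h1).1 hqA'
      · exact key _ hW1mem hpB hqB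
  -- edge minimality
  have hmin : EdgeMinimal k E := by
    intro e he hCC
    obtain ⟨i, r, hi, hr, hir, j, s, hsB, rfl⟩ := hmemE he
    have hsne : s.Nonempty := Finset.card_pos.1 (by rw [hBu i hi s hsB]; omega)
    obtain ⟨z, hz⟩ := hsne
    have hpq1 : ((⟨i, Nat.lt_succ_of_lt hi⟩ : Fin (l+1)), j).1 ≠
        ((⟨r, hr⟩ : Fin (l+1)), z).1 := by
      intro h
      have := congrArg Fin.val h
      simp at this
      omega
    have hpq : ((⟨i, Nat.lt_succ_of_lt hi⟩ : Fin (l+1)), j) ≠ ((⟨r, hr⟩ : Fin (l+1)), z) :=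
      fun h => hpq1 (congrArg Prod.fst h)
    obtain ⟨w, hcs, hws, hpw, hqw⟩ := hCC _ (Finset.mem_univ _) _ (Finset.mem_univ _) hpq
    exact hdisc _ he _ (Finset.mem_insert_self _ _) _
      (Finset.mem_insert_of_mem (Finset.mem_image.2 ⟨z, hz, rfl⟩)) hpq1
      ⟨w, hcs, hws, hpw, hqw⟩
  exact ⟨⟨⟨hcardE, hconn, hsemi⟩, hlenle⟩, hmin, hdisc⟩
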